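/- Let P be row-stochastic, R a vector, γ ∈ [0,1), and T(v) = R + γPv the Bellman operator. With f^T = d_μ^T(I - βP)^{-1} for some β ∈ (0,1) and κ = min_s d_μ(s)/f(s), the operator T satisfies ‖T v_1 - T v_2‖_f ≤ sqrt(γ²(1-κ)/β) · ‖v_1 - v_2‖_f for all v_1, v_2. In particular, if β > γ²(1-κ), then T is a contraction in the f-weighted Euclidean norm. -/

import Mathlib

open Matrix Finset

attribute [local instance] Matrix.linftyOpNormedRing Matrix.linftyOpNormedAlgebra

theorem stmt_5 {S : Type*} [Fintype S] [DecidableEq S] [Nonempty S]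
    (P : Matrix S S ℝ) (hP0 : ∀ s s', 0 ≤ P s s') (hP1 : ∀ s, ∑ s', P s s' = 1)
    (dμ : S → ℝ) (hd0 : ∀ s, 0 < dμ s) (hd1 : ∑ s, dμ s = 1)
    (β : ℝ) (hβ : β ∈ Set.Ioo (0 : ℝ) 1)
    (γ : ℝ) (hγ : γ ∈ Set.Ico (0 : ℝ) 1)
    (R : S → ℝ)
    (T : (S → ℝ) → (S → ℝ)) (hT : ∀ v, T v = R + γ • Matrix.mulVec P v)
    (f : S → ℝ) (hf : f = Matrix.vecMul dμ (1 - β • P)⁻¹)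
    (κ : ℝ) (hκ : κ = ⨅ s, dμ s / f s) :
    (∀ v₁ v₂ : S → ℝ,
      Real.sqrt (∑ s, f s * (T v₁ s - T v₂ s) ^ 2) ≤
        Real.sqrt (γ ^ 2 * (1 - κ) / β) *
          Real.sqrt (∑ s, f s * (v₁ s - v₂ s) ^ 2)) ∧
      (γ ^ 2 * (1 - κ) < β → Real.sqrt (γ ^ 2 * (1 - κ) / β) < 1) := by
  obtain ⟨hβ0, hβ1⟩ := hβ
  obtain ⟨hγ0, hγ1⟩ := hγ
  haveI : CompleteSpace (Matrix S S ℝ) :=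
    FiniteDimensional.complete ℝ _
  have hPn : ‖P‖ ≤ 1 := by
    rw [Matrix.linfty_opNorm_def]
    have h1 : ∀ i : S, (∑ j, ‖P i j‖₊) ≤ (1 : NNReal) := by
      intro i
      rw [← NNReal.coe_le_coe]
      push_cast
      rw [Finset.sum_congr rfl fun j _ => Real.norm_of_nonneg (hP0 i j), hP1 i]
    calc ((Finset.univ.sup fun i : S => ∑ j, ‖P i j‖₊ : NNReal) : ℝ) ≤ ((1 : NNReal) : ℝ) := by
          exact_mod_cast Finset.sup_le fun i _ => h1 i
      _ = 1 := by norm_num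
  have hlt : ‖β • P‖ < 1 := by
    rw [norm_smul, Real.norm_of_nonneg hβ0.le]
    nlinarith [norm_nonneg P]
  set A : Matrix S S ℝ := 1 - β • P with hA
  have hsum : Summable (fun n : ℕ => (β • P) ^ n) := summable_geometric_of_norm_lt_one hlt
  have hGA : (∑' n : ℕ, (β • P) ^ n) * A = 1 := geom_series_mul_neg _ hlt
  have hAinv : A⁻¹ = ∑' n : ℕ, (β • P) ^ n := Matrix.inv_eq_left_inv hGA
  have hpow : ∀ (n : ℕ) (t s : S), 0 ≤ ((β • P) ^ n) t s := by
    intro n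
    induction n with
    | zero =>
      intro t s
      by_cases h : t = s <;> simp [Matrix.one_apply, h]
    | succ n ih =>
      intro t s
      rw [pow_succ, Matrix.mul_apply]
      refine Finset.sum_nonneg fun k _ => mul_nonneg (ih t k) ?_
      simpa [smul_eq_mul] using mul_nonneg hβ0.le (hP0 k s)
  have hinv0 : ∀ t s, 0 ≤ A⁻¹ t s := by
    intro t s
    rw [hAinv]
    have hL : HasSum (fun n : ℕ => ((β • P) ^ n) t s) ((∑' n : ℕ, (β • P) ^ n) t s) := by
      have := (LinearMap.toContinuousLinearMap
        (((LinearMap.proj (R := ℝ) (φ := fun _ : S => ℝ) s).comp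
          (LinearMap.proj (R := ℝ) (φ := fun _ : S => S → ℝ) t)) :
            Matrix S S ℝ →ₗ[ℝ] ℝ)).hasSum hsum.hasSum
      exact this
    exact hasSum_le (fun n => hpow n t s) hasSum_zero hL
  have hdet : IsUnit A.det := Matrix.isUnit_det_of_left_inverse hGA
  have hfA : Matrix.vecMul f A = dμ := by
    rw [hf, Matrix.vecMul_vecMul, Matrix.nonsing_inv_mul A hdet, Matrix.vecMul_one]
  have hf0 : ∀ s, 0 ≤ f s := by
    intro s
    rw [hf]
    simp only [Matrix.vecMul, dotProduct]
    exact Finset.sum_nonneg fun t _ => mul_nonneg (hd0 t).le (hinv0 t s)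
  have hfd : ∀ s, f s = dμ s + β * ∑ t, f t * P t s := by
    intro s
    have h1 := congrFun hfA s
    have h2 : Matrix.vecMul f A s = f s - β * ∑ t, f t * P t s := by
      have h3 : ∀ t, f t * A t s = (if t = s then f t else 0) - β * (f t * P t s) := by
        intro t
        by_cases h : t = s <;>
          simp [hA, Matrix.sub_apply, Matrix.smul_apply, Matrix.one_apply, smul_eq_mul, h] <;> ring
      simp only [Matrix.vecMul, dotProduct]
      rw [Finset.sum_congr rfl fun t _ => h3 t, Finset.sum_sub_distrib,
        Finset.sum_ite_eq' Finset.univ s f, ← Finset.mul_sum]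
      simp
    rw [h2] at h1
    linarith
  have hdf : ∀ s, dμ s ≤ f s := by
    intro s
    have h4 : 0 ≤ ∑ t, f t * P t s :=
      Finset.sum_nonneg fun t _ => mul_nonneg (hf0 t) (hP0 t s)
    nlinarith [hfd s]
  have hfpos : ∀ s, 0 < f s := fun s => lt_of_lt_of_le (hd0 s) (hdf s)
  have hκs : ∀ s, κ ≤ dμ s / f s := by
    intro s
    rw [hκ]
    exact ciInf_le (Finite.bddBelow_range _) s
  have hκle : ∀ s, κ * f s ≤ dμ s := fun s => (le_div_iff₀ (hfpos s)).mp (hκs s)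
  have hκ1 : κ ≤ 1 := by
    obtain ⟨s⟩ := (inferInstance : Nonempty S)
    exact (hκs s).trans ((div_le_one (hfpos s)).mpr (hdf s))
  have hw : ∀ t, ∑ s, f s * P s t ≤ (1 - κ) / β * f t := by
    intro t
    have h5 := hfd t
    have h6 := hκle t
    rw [div_mul_eq_mul_div, le_div_iff₀ hβ0]
    nlinarith
  have hc : 0 ≤ γ ^ 2 * (1 - κ) / β :=
    div_nonneg (mul_nonneg (sq_nonneg γ) (by linarith)) hβ0.le
  constructor
  · intro v₁ v₂
    set u : S → ℝ := fun s => v₁ s - v₂ s with hu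
    have hTd : ∀ s, T v₁ s - T v₂ s = γ * ∑ t, P s t * u t := by
      intro s
      have h7 : (∑ t, P s t * v₁ t) - (∑ t, P s t * v₂ t) = ∑ t, P s t * u t := by
        rw [← Finset.sum_sub_distrib]
        exact Finset.sum_congr rfl fun t _ => by simp [hu]; ring
      simp only [hT, Pi.add_apply, Pi.smul_apply, smul_eq_mul, Matrix.mulVec, dotProduct]
      rw [← h7]
      ring
    have key : ∑ s, f s * (T v₁ s - T v₂ s) ^ 2 ≤
        γ ^ 2 * (1 - κ) / β * ∑ s, f s * u s ^ 2 := by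
      calc ∑ s, f s * (T v₁ s - T v₂ s) ^ 2
          = γ ^ 2 * ∑ s, f s * (∑ t, P s t * u t) ^ 2 := by
            rw [Finset.mul_sum]
            exact Finset.sum_congr rfl fun s _ => by rw [hTd s]; ring
        _ ≤ γ ^ 2 * ∑ s, f s * (∑ t, P s t * u t ^ 2) := by
            refine mul_le_mul_of_nonneg_left ?_ (sq_nonneg γ)
            refine Finset.sum_le_sum fun s _ => mul_le_mul_of_nonneg_left ?_ (hf0 s)
            have hcs := Finset.sum_sq_le_sum_mul_sum_of_sq_eq_mul Finset.univ
              (r := fun t => P s t * u t) (f := fun t => P s t)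
              (g := fun t => P s t * u t ^ 2)
              (fun t _ => hP0 s t) (fun t _ => mul_nonneg (hP0 s t) (sq_nonneg _))
              (fun t _ => by ring)
            rw [hP1 s, one_mul] at hcs
            exact hcs
        _ = γ ^ 2 * ∑ t, (∑ s, f s * P s t) * u t ^ 2 := by
            congr 1
            simp_rw [Finset.mul_sum]
            rw [Finset.sum_comm]
            refine Finset.sum_congr rfl fun t _ => ?_
            rw [Finset.sum_mul]
            exact Finset.sum_congr rfl fun s _ => by ring
        _ ≤ γ ^ 2 * ∑ t, ((1 - κ) / β * f t) * u t ^ 2 := by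
            refine mul_le_mul_of_nonneg_left ?_ (sq_nonneg γ)
            exact Finset.sum_le_sum fun t _ =>
              mul_le_mul_of_nonneg_right (hw t) (sq_nonneg _)
        _ = γ ^ 2 * (1 - κ) / β * ∑ s, f s * u s ^ 2 := by
            rw [Finset.mul_sum, Finset.mul_sum]
            exact Finset.sum_congr rfl fun s _ => by ring
    calc Real.sqrt (∑ s, f s * (T v₁ s - T v₂ s) ^ 2)
        ≤ Real.sqrt (γ ^ 2 * (1 - κ) / β * ∑ s, f s * u s ^ 2) := Real.sqrt_le_sqrt key
      _ = Real.sqrt (γ ^ 2 * (1 - κ) / β) * Real.sqrt (∑ s, f s * (v₁ s - v₂ s) ^ 2) := by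
          rw [Real.sqrt_mul hc]
  · intro h
    have hc1 : γ ^ 2 * (1 - κ) / β < 1 := (div_lt_one hβ0).mpr h
    calc Real.sqrt (γ ^ 2 * (1 - κ) / β) < Real.sqrt 1 := Real.sqrt_lt_sqrt hc hc1
      _ = 1 := Real.sqrt_one
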